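/- Let p be a prime and t ≥ 0. Suppose (H_m)_{m≥1} is a family of abelian groups where each H_m is a ℤ/p^mℤ-module, H_1 is a free ℤ/pℤ-module of rank t, and for each m ≥ 2 there is a short exact sequence 0 → H_{m−1} → H_m → H_1 → 0 in which the image of H_{m−1} equals the p^{m−1}-torsion submodule H_m[p^{m−1}]. Then each H_m is a free ℤ/p^mℤ-module of rank t. -/

import Mathlib

private lemma ptor_dvd {p m : ℕ} (hp : p.Prime) {a : ZMod (p ^ (m + 1))} (ha : p • a = 0) :
    p ^ m ∣ a.val := by
  haveI : NeZero (p ^ (m + 1)) := ⟨pow_ne_zero _ hp.pos.ne'⟩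
  have h : ((p * a.val : ℕ) : ZMod (p ^ (m + 1))) = 0 := by
    push_cast
    rw [ZMod.natCast_val, ZMod.cast_id, ← nsmul_eq_mul]
    exact ha
  rw [ZMod.natCast_eq_zero_iff] at h
  have h' : p * p ^ m ∣ p * a.val := by rw [← pow_succ']; exact h
  exact (mul_dvd_mul_iff_left hp.pos.ne').mp h'

private lemma card_ptor_le (p m t : ℕ) (hp : p.Prime) :
    Nat.card {w : Fin t → ZMod (p ^ (m + 1)) // p • w = 0} ≤ p ^ t := by
  haveI : NeZero (p ^ (m + 1)) := ⟨pow_ne_zero _ hp.pos.ne'⟩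
  have key : ∀ (w : {w : Fin t → ZMod (p ^ (m + 1)) // p • w = 0}) (i : Fin t),
      p ^ m ∣ (w.1 i).val := by
    intro w i
    apply ptor_dvd hp
    have := congrFun w.2 i
    simpa using this
  have hlt : ∀ (w : {w : Fin t → ZMod (p ^ (m + 1)) // p • w = 0}) (i : Fin t),
      (w.1 i).val / p ^ m < p := by
    intro w i
    rw [Nat.div_lt_iff_lt_mul (pow_pos hp.pos m)]
    calc (w.1 i).val < p ^ (m + 1) := ZMod.val_lt _
      _ = p * p ^ m := pow_succ' p m
  calc Nat.card {w : Fin t → ZMod (p ^ (m + 1)) // p • w = 0}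
      ≤ Nat.card (Fin t → Fin p) := by
        apply Nat.card_le_card_of_injective
          (fun w i => (⟨(w.1 i).val / p ^ m, hlt w i⟩ : Fin p))
        intro w w' h
        apply Subtype.ext
        funext i
        apply ZMod.val_injective
        have h2 : (w.1 i).val / p ^ m = (w'.1 i).val / p ^ m := by
          have := congrFun h i
          simpa using this
        rw [← Nat.div_mul_cancel (key w i), ← Nat.div_mul_cancel (key w' i), h2]
    _ = p ^ t := by simp [Nat.card_fun]

/-- Inductive core of torsion-freeness of étale cohomology: if `H 0` (playing
the role of `H_1`) is free of rank `t` over `ℤ/pℤ` and for each `n` there is a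
short exact sequence `0 → H n → H (n+1) → H 0 → 0` in which the image of `H n`
is exactly the `p^(n+1)`-torsion of `H (n+1)`, then each `H n` (playing the
role of `H_{n+1}`) is a free `ℤ/p^(n+1)ℤ`-module of rank `t`. -/
theorem free_rank_of_exact_tower (p : ℕ) (hp : p.Prime) (t : ℕ)
    (H : ℕ → Type*) [∀ n, AddCommGroup (H n)] [∀ n, Module (ZMod (p ^ (n + 1))) (H n)]
    (e1 : H 0 ≃ₗ[ZMod (p ^ (0 + 1))] (Fin t → ZMod (p ^ (0 + 1))))
    (f : ∀ n, H n →+ H (n + 1)) (g : ∀ n, H (n + 1) →+ H 0)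
    (hf : ∀ n, Function.Injective (f n))
    (hg : ∀ n, Function.Surjective (g n))
    (hexact : ∀ n, (g n).ker = (f n).range)
    (htor : ∀ n, ∀ x : H (n + 1), x ∈ (f n).range ↔ p ^ (n + 1) • x = 0) :
    ∀ n, Nonempty (H n ≃ₗ[ZMod (p ^ (n + 1))] (Fin t → ZMod (p ^ (n + 1)))) := by
  intro n
  induction n with
  | zero => exact ⟨e1⟩
  | succ n ih =>
    obtain ⟨e⟩ := ih
    haveI h1 : NeZero (p ^ (0 + 1)) := ⟨pow_ne_zero _ hp.pos.ne'⟩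
    haveI h2 : NeZero (p ^ (n + 1)) := ⟨pow_ne_zero _ hp.pos.ne'⟩
    haveI h3 : NeZero (p ^ (n + 1 + 1)) := ⟨pow_ne_zero _ hp.pos.ne'⟩
    haveI : Finite (H 0) := Finite.of_equiv _ e1.symm.toEquiv
    haveI : Finite (H n) := Finite.of_equiv _ e.symm.toEquiv
    have hker : (g n).ker = (f n).range := hexact n
    have fker : ∀ y : H n, f n y ∈ (g n).ker := fun y => by
      rw [hker]; exact ⟨y, rfl⟩
    have fbij : Function.Bijective (fun y : H n => (⟨f n y, fker y⟩ : (g n).ker)) := by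
      constructor
      · intro a b hab
        exact hf n (congrArg Subtype.val hab)
      · rintro ⟨x, hx⟩
        rw [hker] at hx
        obtain ⟨y, rfl⟩ := hx
        exact ⟨y, rfl⟩
    haveI : Finite ((g n).ker) := Finite.of_equiv _ (Equiv.ofBijective _ fbij)
    haveI : ∀ z : H 0, Finite {x : H (n + 1) // g n x = z} := by
      intro z
      obtain ⟨x0, hx0⟩ := hg n z
      apply Finite.of_injective (fun x : {x : H (n + 1) // g n x = z} =>
        (⟨x.1 - x0, by simp [AddMonoidHom.mem_ker, map_sub, x.2, hx0]⟩ : (g n).ker))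
      intro a b hab
      have := congrArg Subtype.val hab
      simp only [sub_left_inj] at this
      exact Subtype.ext this
    haveI finM : Finite (H (n + 1)) := Finite.of_equiv _ (Equiv.sigmaFiberEquiv (g n))
    have cardH0 : Nat.card (H 0) = p ^ t := by
      rw [Nat.card_congr e1.toEquiv]
      simp [Nat.card_fun]
    have cardHn : Nat.card (H n) = (p ^ (n + 1)) ^ t := by
      rw [Nat.card_congr e.toEquiv]
      simp [Nat.card_fun]
    have cardM : Nat.card (H (n + 1)) = p ^ t * (p ^ (n + 1)) ^ t := by
      rw [AddSubgroup.card_eq_card_quotient_mul_card_addSubgroup ((g n).ker),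
        Nat.card_congr (QuotientAddGroup.quotientKerEquivOfSurjective (g n) (hg n)).toEquiv,
        Nat.card_congr (Equiv.ofBijective _ fbij).symm, cardH0, cardHn]
    have cardM' : Nat.card (H (n + 1)) = Nat.card (Fin t → ZMod (p ^ (n + 1 + 1))) := by
      rw [cardM, Nat.card_fun, Nat.card_zmod, Nat.card_eq_fintype_card, Fintype.card_fin,
        ← mul_pow, ← pow_succ']
    -- the multiplication-by-p homomorphism
    set δ : H (n + 1) →+ H (n + 1) :=
      { toFun := fun x => p • x
        map_zero' := smul_zero p
        map_add' := fun a b => smul_add p a b } with hδdef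
    have hδapp : ∀ x : H (n + 1), δ x = p • x := fun _ => rfl
    have hδrange : δ.range ≤ (f n).range := by
      rintro x ⟨y, rfl⟩
      rw [htor n]
      rw [hδapp, smul_smul, ← pow_succ, ← Nat.cast_smul_eq_nsmul (ZMod (p ^ (n + 1 + 1))),
        ZMod.natCast_self, zero_smul]
    have hδker : Nat.card δ.ker ≤ p ^ t := by
      have hmem : ∀ x : δ.ker, (x : H (n + 1)) ∈ (f n).range := by
        intro x
        rw [htor n]
        have hx : p • (x : H (n + 1)) = 0 := x.2
        calc p ^ (n + 1) • (x : H (n + 1)) = p ^ n • (p • (x : H (n + 1))) := by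
              rw [smul_smul, ← pow_succ]
          _ = 0 := by rw [hx, smul_zero]
      choose y hy using fun x : δ.ker => hmem x
      have hpy : ∀ x : δ.ker, p • y x = 0 := by
        intro x
        apply hf n
        rw [map_nsmul, hy x, map_zero]
        exact x.2
      have hinj : Nat.card δ.ker ≤
          Nat.card {w : Fin t → ZMod (p ^ (n + 1)) // p • w = 0} := by
        apply Nat.card_le_card_of_injective
          (fun x : δ.ker => (⟨e (y x), by rw [← map_nsmul, hpy x, map_zero]⟩ :
            {w : Fin t → ZMod (p ^ (n + 1)) // p • w = 0}))
        intro a b hab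
        have h1 : e (y a) = e (y b) := congrArg Subtype.val hab
        have h2 : y a = y b := e.injective h1
        have h3 : (a : H (n + 1)) = (b : H (n + 1)) := by
          rw [← hy a, ← hy b, h2]
        exact Subtype.ext h3
      exact hinj.trans (card_ptor_le p n t hp)
    have cardrange : Nat.card ((f n).range) = (p ^ (n + 1)) ^ t := by
      rw [← hker, ← Nat.card_congr (Equiv.ofBijective _ fbij), cardHn]
    have cardMδ : Nat.card (H (n + 1)) = Nat.card δ.range * Nat.card δ.ker := by
      rw [AddSubgroup.card_eq_card_quotient_mul_card_addSubgroup δ.ker,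
        Nat.card_congr (QuotientAddGroup.quotientKerEquivRange δ).toEquiv]
    have hrange_ge : (p ^ (n + 1)) ^ t ≤ Nat.card δ.range := by
      by_contra hlt
      push_neg at hlt
      have h4 : Nat.card (H (n + 1)) < (p ^ (n + 1)) ^ t * p ^ t := by
        rw [cardMδ]
        calc Nat.card δ.range * Nat.card δ.ker ≤ Nat.card δ.range * p ^ t :=
              Nat.mul_le_mul_left _ hδker
          _ < (p ^ (n + 1)) ^ t * p ^ t := by
              exact mul_lt_mul_of_pos_right hlt (pow_pos hp.pos t)
      rw [cardM, mul_comm] at h4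
      exact lt_irrefl _ h4
    haveI : Finite ((f n).range) := by rw [← hker]; infer_instance
    have hδeq : δ.range = (f n).range := by
      apply AddSubgroup.eq_of_le_of_card_ge hδrange
      rw [cardrange]
      exact hrange_ge
    have P : ∀ x ∈ (f n).range, ∃ z : H (n + 1), p • z = x := by
      intro x hx
      rw [← hδeq] at hx
      obtain ⟨z, hz⟩ := hx
      exact ⟨z, hz⟩
    -- choose lifts of a basis of H 0
    choose b hb using fun i : Fin t => hg n (e1.symm (Pi.single i 1))
    set R := ZMod (p ^ (n + 1 + 1)) with hR
    set φ : (Fin t → R) →ₗ[R] H (n + 1) := Fintype.linearCombination R b with hφdef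
    have stepA : ∀ x : H (n + 1), ∃ v, x - φ v ∈ (f n).range := by
      intro x
      refine ⟨fun i => ((e1 (g n x) i).val : R), ?_⟩
      rw [← hker, AddMonoidHom.mem_ker, map_sub]
      have hgφ : g n (φ (fun i => ((e1 (g n x) i).val : R))) = g n x := by
        rw [hφdef, Fintype.linearCombination_apply, map_sum]
        have hterm : ∀ i : Fin t, g n (((e1 (g n x) i).val : R) • b i) =
            (e1 (g n x) i).val • e1.symm (Pi.single i 1) := by
          intro i
          rw [Nat.cast_smul_eq_nsmul, map_nsmul, hb i]
        simp_rw [hterm]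
        have hsum : ∑ i : Fin t, (e1 (g n x) i).val • e1.symm (Pi.single i 1) =
            e1.symm (∑ i : Fin t, (e1 (g n x) i).val • Pi.single i 1) := by
          rw [map_sum]
          simp_rw [map_nsmul]
        rw [hsum]
        have hsingle : ∑ i : Fin t, (e1 (g n x) i).val •
            (Pi.single i 1 : Fin t → ZMod (p ^ (0 + 1))) = e1 (g n x) := by
          have hone : ∀ i : Fin t, (e1 (g n x) i).val •
              (Pi.single i 1 : Fin t → ZMod (p ^ (0 + 1))) =
              (Pi.single i (e1 (g n x) i) : Fin t → ZMod (p ^ (0 + 1))) := by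
            intro i
            funext j
            rcases eq_or_ne j i with hji | hji
            · subst hji
              simp only [Pi.smul_apply, Pi.single_eq_same]
              rw [nsmul_eq_mul, mul_one, ZMod.natCast_val, ZMod.cast_id]
            · simp [Pi.single_eq_of_ne hji]
          simp_rw [hone]
          exact Finset.univ_sum_single (e1 (g n x))
        rw [hsingle, LinearEquiv.symm_apply_apply]
      rw [hgφ, sub_self]
    have iter : ∀ k, ∀ x : H (n + 1), ∃ v z, x = φ v + p ^ k • z := by
      intro k
      induction k with
      | zero =>
        intro x
        exact ⟨0, x, by simp⟩
      | succ k IH =>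
        intro x
        obtain ⟨v, z, hz⟩ := IH x
        obtain ⟨w, hw⟩ := stepA z
        obtain ⟨u, hu⟩ := P _ hw
        refine ⟨v + p ^ k • w, u, ?_⟩
        have hz2 : z = φ w + p • u := by rw [hu]; abel
        rw [map_add, map_nsmul, hz, hz2, smul_add, smul_smul, ← pow_succ]
        abel
    have hsurj : Function.Surjective φ := by
      intro x
      obtain ⟨v, z, hz⟩ := iter (n + 1 + 1) x
      refine ⟨v, ?_⟩
      rw [hz]
      have hz0 : p ^ (n + 1 + 1) • z = 0 := by
        rw [← Nat.cast_smul_eq_nsmul (ZMod (p ^ (n + 1 + 1))), ZMod.natCast_self, zero_smul]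
      rw [hz0, add_zero]
    have hbij : Function.Bijective φ := by
      rw [Nat.bijective_iff_surjective_and_card]
      exact ⟨hsurj, cardM'.symm⟩
    exact ⟨(LinearEquiv.ofBijective φ hbij).symm⟩
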